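/- arXiv:2011.09341 — 2 statements merged into one kernel-verified Lean document; each statement's English description precedes it below -/
import Mathlib

section
/- For every φ ∈ C_c^∞(ℝ^d) one has ∫ φ(x)² |∇U(x)|² dπ(x) ≤ 16 ∫ |∇φ(x)|² dπ(x) + 4 C_U d^{1+ω} ∫ φ(x)² dπ(x). -/
open MeasureTheory Real
open scoped RealInnerProductSpace NNReal ENNReal

/-- The Laplacian of `U`, defined as the sum of second partial derivatives. -/
noncomputable def lapl (d : ℕ) (U : EuclideanSpace ℝ (Fin d) → ℝ)
    (x : EuclideanSpace ℝ (Fin d)) : ℝ :=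
  ∑ i : Fin d,
    fderiv ℝ (fun y => fderiv ℝ U y (EuclideanSpace.single i 1)) x (EuclideanSpace.single i 1)

/-- The Gibbs probability measure `π` with density `Z⁻¹ e^{-U}` w.r.t. Lebesgue measure. -/
noncomputable def gibbs (d : ℕ) (U : EuclideanSpace ℝ (Fin d) → ℝ) (Z : ℝ) :
    Measure (EuclideanSpace ℝ (Fin d)) :=
  volume.withDensity (fun x => ENNReal.ofReal (Real.exp (-U x) / Z))

/-- Squared Frobenius norm of the Hessian of `u`. -/
noncomputable def hessFS (d : ℕ) (u : EuclideanSpace ℝ (Fin d) → ℝ)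
    (x : EuclideanSpace ℝ (Fin d)) : ℝ :=
  ∑ i : Fin d, ∑ j : Fin d,
    (fderiv ℝ (fun y => fderiv ℝ u y (EuclideanSpace.single j 1)) x
      (EuclideanSpace.single i 1)) ^ 2

/-- Divergence of a vector field `F`. -/
noncomputable def diverg (d : ℕ)
    (F : EuclideanSpace ℝ (Fin d) → EuclideanSpace ℝ (Fin d))
    (x : EuclideanSpace ℝ (Fin d)) : ℝ :=
  ∑ i : Fin d, fderiv ℝ (fun y => F y i) x (EuclideanSpace.single i 1)

variable {d : ℕ}
local notation "E" => EuclideanSpace ℝ (Fin d)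

lemma fderiv_apply_single (U : E → ℝ) (x : E) (i : Fin d) :
    fderiv ℝ U x (EuclideanSpace.single i 1) = gradient U x i := by
  have : fderiv ℝ U x (EuclideanSpace.single i 1) = ⟪gradient U x, EuclideanSpace.single i 1⟫ := by
    rw [gradient, InnerProductSpace.toDual_symm_apply]
  rw [this, EuclideanSpace.inner_single_right]; simp

lemma norm_sq_sum (y : E) : ‖y‖ ^ 2 = ∑ i, (y i) ^ 2 := by
  rw [EuclideanSpace.norm_eq, Real.sq_sqrt (by positivity)]
  simp [sq_abs]

lemma continuous_gradient {f : E → ℝ} (hf : ContDiff ℝ 1 f) : Continuous (gradient f) :=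
  (InnerProductSpace.toDual ℝ _).symm.continuous.comp (hf.continuous_fderiv one_ne_zero)

lemma hcs_gradient {f : E → ℝ} (hf : HasCompactSupport f) : HasCompactSupport (gradient f) :=
  (hf.fderiv ℝ).comp_left (g := (InnerProductSpace.toDual ℝ _).symm) (map_zero _)

lemma ibp_coord (U : E → ℝ) (hU : ContDiff ℝ 2 U)
    (φ : E → ℝ) (hφ : ContDiff ℝ (⊤:ℕ∞) φ) (hφc : HasCompactSupport φ) (i : Fin d) :
    ∫ x : E, φ x ^ 2 * (fderiv ℝ U x (EuclideanSpace.single i 1)) ^ 2 * Real.exp (-U x)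
      = ∫ x : E, (2 * φ x * fderiv ℝ φ x (EuclideanSpace.single i 1)
            * fderiv ℝ U x (EuclideanSpace.single i 1)
          + φ x ^ 2 * fderiv ℝ (fun y => fderiv ℝ U y (EuclideanSpace.single i 1)) x
              (EuclideanSpace.single i 1)) * Real.exp (-U x) := by
  set v : E := EuclideanSpace.single i 1 with hv
  set W : E → ℝ := fun x => fderiv ℝ U x v with hW
  set fi : E → ℝ := fun x => φ x ^ 2 * W x with hfi
  set g : E → ℝ := fun x => Real.exp (-U x) with hg
  have hWc : ContDiff ℝ 1 W := (hU.fderiv_right (le_refl _)).clm_apply contDiff_const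
  have hφ1 : ContDiff ℝ 1 φ := hφ.of_le (mod_cast le_top)
  have hfic : ContDiff ℝ 1 fi := (hφ1.pow 2).mul hWc
  have hgc : ContDiff ℝ 1 g := (Real.contDiff_exp.comp hU.neg).of_le one_le_two
  have hφ2C : HasCompactSupport (fun x : E => φ x ^ 2) :=
    hφc.comp_left (g := fun t : ℝ => t ^ 2) (by simp)
  have hfiC : HasCompactSupport fi := hφ2C.mul_right
  -- derivative of g
  have hgd : ∀ x : E, fderiv ℝ g x = (-g x) • fderiv ℝ U x := by
    intro x
    have h1 : HasFDerivAt (fun x : E => -U x) (-(fderiv ℝ U x)) x :=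
      ((hU.differentiable two_ne_zero x).hasFDerivAt).neg
    have h2 := (Real.hasDerivAt_exp (-U x)).comp_hasFDerivAt x h1
    have h3 : HasFDerivAt g ((-g x) • fderiv ℝ U x) x := by
      rw [smul_neg, ← neg_smul] at h2; exact h2
    exact h3.fderiv
  -- derivative of fi
  have hfid : ∀ x : E, fderiv ℝ fi x v
      = 2 * φ x * fderiv ℝ φ x v * W x + φ x ^ 2 * fderiv ℝ W x v := by
    intro x
    have hφx : DifferentiableAt ℝ φ x := hφ1.differentiable one_ne_zero x
    have h2 : DifferentiableAt ℝ (fun y => φ y ^ 2) x := hφx.pow 2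
    rw [hfi]
    rw [fderiv_fun_mul h2 (hWc.differentiable one_ne_zero x)]
    have hsq : (fun y => φ y ^ 2) = fun y => φ y * φ y := by ext y; ring
    have hp : fderiv ℝ (fun y => φ y ^ 2) x = φ x • fderiv ℝ φ x + φ x • fderiv ℝ φ x := by
      rw [hsq, fderiv_fun_mul hφx hφx]
    simp [hp]
    ring
  -- continuity facts
  have hcW : Continuous W := hWc.continuous
  have hcg : Continuous g := hgc.continuous
  have hcfi : Continuous fi := hfic.continuous
  have hcDfi : Continuous fun x => fderiv ℝ fi x v :=
    (ContinuousLinearMap.apply ℝ ℝ v).continuous.comp (hfic.continuous_fderiv one_ne_zero)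
  have hcDg : Continuous fun x => fderiv ℝ g x v :=
    (ContinuousLinearMap.apply ℝ ℝ v).continuous.comp (hgc.continuous_fderiv one_ne_zero)
  -- integrabilities
  have h1 : Integrable (fun x => fderiv ℝ fi x v * g x) :=
    ((hcDfi.mul hcg)).integrable_of_hasCompactSupport ((hfiC.fderiv_apply ℝ v).mul_right)
  have h2 : Integrable (fun x => fi x * fderiv ℝ g x v) :=
    ((hcfi.mul hcDg)).integrable_of_hasCompactSupport (hfiC.mul_right)
  have h3 : Integrable (fun x => fi x * g x) :=
    ((hcfi.mul hcg)).integrable_of_hasCompactSupport (hfiC.mul_right)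
  have ibp := integral_mul_fderiv_eq_neg_fderiv_mul_of_integrable h1 h2 h3
    (fun x _ => hfic.differentiable one_ne_zero x) (fun x _ => hgc.differentiable one_ne_zero x)
  have lhs : (fun x => fi x * fderiv ℝ g x v)
      = fun x => -(φ x ^ 2 * W x ^ 2 * Real.exp (-U x)) := by
    ext x; rw [hgd x]; simp [hfi, hg]; ring
  have rhs : (fun x => fderiv ℝ fi x v * g x)
      = fun x => (2 * φ x * fderiv ℝ φ x v * W x + φ x ^ 2 * fderiv ℝ W x v)
          * Real.exp (-U x) := by
    ext x; rw [hfid x]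
  rw [lhs, rhs] at ibp
  rw [integral_neg] at ibp
  have := neg_injective ibp
  rw [← this]

lemma vol_ineq (U : E → ℝ) (hU : ContDiff ℝ 2 U)
    (K : ℝ) (hLap : ∀ x, lapl d U x ≤ K + ‖gradient U x‖ ^ 2 / 2)
    (φ : E → ℝ) (hφ : ContDiff ℝ (⊤:ℕ∞) φ) (hφc : HasCompactSupport φ) :
    ∫ x : E, φ x ^ 2 * ‖gradient U x‖ ^ 2 * Real.exp (-U x)
      ≤ 16 * (∫ x : E, ‖gradient φ x‖ ^ 2 * Real.exp (-U x))
        + 4 * K * ∫ x : E, φ x ^ 2 * Real.exp (-U x) := by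
  classical
  set ρ : E → ℝ := fun x => Real.exp (-U x) with hρ
  have hρc : Continuous ρ := Real.continuous_exp.comp hU.continuous.neg
  have hρpos : ∀ x, 0 ≤ ρ x := fun x => (Real.exp_pos _).le
  have hφ1 : ContDiff ℝ 1 φ := hφ.of_le (mod_cast le_top)
  have hφ2C : HasCompactSupport (fun x : E => φ x ^ 2) :=
    hφc.comp_left (g := fun t : ℝ => t ^ 2) (by simp)
  have hcGU : Continuous (gradient U) := continuous_gradient (hU.of_le one_le_two)
  have hcGφ : Continuous (gradient φ) := continuous_gradient hφ1
  have hcφ : Continuous φ := hφ.continuous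
  -- named integrands
  set A : ℝ := ∫ x : E, φ x ^ 2 * ‖gradient U x‖ ^ 2 * ρ x with hA
  set B : ℝ := ∫ x : E, ‖gradient φ x‖ ^ 2 * ρ x with hB
  set C : ℝ := ∫ x : E, φ x ^ 2 * ρ x with hC
  -- integrability
  have intA : Integrable (fun x : E => φ x ^ 2 * ‖gradient U x‖ ^ 2 * ρ x) := by
    refine Continuous.integrable_of_hasCompactSupport ?_ ?_
    · exact ((hcφ.pow 2).mul (hcGU.norm.pow 2)).mul hρc
    · exact (hφ2C.mul_right).mul_right
  have intB : Integrable (fun x : E => ‖gradient φ x‖ ^ 2 * ρ x) := by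
    refine Continuous.integrable_of_hasCompactSupport ((hcGφ.norm.pow 2).mul hρc) ?_
    exact ((hcs_gradient hφc).comp_left (g := fun y : E => ‖y‖ ^ 2) (by simp)).mul_right
  have intC : Integrable (fun x : E => φ x ^ 2 * ρ x) :=
    ((hcφ.pow 2).mul hρc).integrable_of_hasCompactSupport hφ2C.mul_right
  -- sum the coordinate IBP identities
  have DUc : ∀ i : Fin d, Continuous fun x : E =>
      fderiv ℝ U x (EuclideanSpace.single i 1) := fun i =>
    (ContinuousLinearMap.apply ℝ ℝ _).continuous.comp (hU.continuous_fderiv two_ne_zero)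
  have Dφc : ∀ i : Fin d, Continuous fun x : E =>
      fderiv ℝ φ x (EuclideanSpace.single i 1) := fun i =>
    (ContinuousLinearMap.apply ℝ ℝ _).continuous.comp (hφ1.continuous_fderiv one_ne_zero)
  have D2c : ∀ i : Fin d, Continuous fun x : E =>
      fderiv ℝ (fun y => fderiv ℝ U y (EuclideanSpace.single i 1)) x
        (EuclideanSpace.single i 1) := fun i =>
    (ContinuousLinearMap.apply ℝ ℝ _).continuous.comp
      (((hU.fderiv_right (le_refl _)).clm_apply contDiff_const).continuous_fderiv one_ne_zero)
  have intL : ∀ i : Fin d, Integrable (fun x : E =>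
      φ x ^ 2 * (fderiv ℝ U x (EuclideanSpace.single i 1)) ^ 2 * ρ x) := by
    intro i
    refine Continuous.integrable_of_hasCompactSupport ?_ (hφ2C.mul_right.mul_right)
    exact ((hcφ.pow 2).mul ((DUc i).pow 2)).mul hρc
  have intR : ∀ i : Fin d, Integrable (fun x : E =>
      (2 * φ x * fderiv ℝ φ x (EuclideanSpace.single i 1)
          * fderiv ℝ U x (EuclideanSpace.single i 1)
        + φ x ^ 2 * fderiv ℝ (fun y => fderiv ℝ U y (EuclideanSpace.single i 1)) x
            (EuclideanSpace.single i 1)) * ρ x) := by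
    intro i
    refine Continuous.integrable_of_hasCompactSupport ?_ ?_
    · exact ((((continuous_const.mul hcφ).mul (Dφc i)).mul (DUc i)).add
        ((hcφ.pow 2).mul (D2c i))).mul hρc
    · have h1 : HasCompactSupport (fun x : E => 2 * φ x) :=
        hφc.comp_left (g := fun t : ℝ => 2 * t) (by simp)
      exact ((h1.mul_right.mul_right).add (hφ2C.mul_right)).mul_right
  have key : A = ∫ x : E,
      (2 * φ x * ⟪gradient φ x, gradient U x⟫ + φ x ^ 2 * lapl d U x) * ρ x := by
    have h1 : A = ∑ i : Fin d, ∫ x : E,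
        φ x ^ 2 * (fderiv ℝ U x (EuclideanSpace.single i 1)) ^ 2 * ρ x := by
      rw [hA, ← integral_finset_sum _ (fun i _ => intL i)]
      congr 1; ext x
      rw [norm_sq_sum]
      rw [Finset.mul_sum, Finset.sum_mul]
      congr 1; ext i
      rw [fderiv_apply_single]
    have h2 : ∀ i ∈ Finset.univ, (∫ x : E,
        φ x ^ 2 * (fderiv ℝ U x (EuclideanSpace.single i 1)) ^ 2 * ρ x)
        = ∫ x : E, (2 * φ x * fderiv ℝ φ x (EuclideanSpace.single i 1)
            * fderiv ℝ U x (EuclideanSpace.single i 1)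
          + φ x ^ 2 * fderiv ℝ (fun y => fderiv ℝ U y (EuclideanSpace.single i 1)) x
              (EuclideanSpace.single i 1)) * ρ x := fun i _ => ibp_coord U hU φ hφ hφc i
    rw [h1, Finset.sum_congr rfl h2, ← integral_finset_sum _ (fun i _ => intR i)]
    congr 1; ext x
    rw [← Finset.sum_mul]
    congr 1
    rw [Finset.sum_add_distrib]
    congr 1
    · simp only [fderiv_apply_single, PiLp.inner_apply, RCLike.inner_apply, conj_trivial]
      rw [Finset.mul_sum]
      exact Finset.sum_congr rfl fun i _ => by ring
    · rw [lapl, Finset.mul_sum]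
  -- pointwise bound
  have laplc : Continuous (lapl d U) := continuous_finset_sum _ (fun i _ => D2c i)
  have intF : Integrable (fun x : E =>
      (2 * φ x * ⟪gradient φ x, gradient U x⟫ + φ x ^ 2 * lapl d U x) * ρ x) := by
    refine Continuous.integrable_of_hasCompactSupport ?_ ?_
    · exact (((continuous_const.mul hcφ).mul (hcGφ.inner hcGU)).add
        ((hcφ.pow 2).mul laplc)).mul hρc
    · have h1 : HasCompactSupport (fun x : E => 2 * φ x) :=
        hφc.comp_left (g := fun t : ℝ => 2 * t) (by simp)
      exact (h1.mul_right.add hφ2C.mul_right).mul_right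
  have intG : Integrable (fun x : E =>
      (4 * (‖gradient φ x‖ ^ 2) + K * φ x ^ 2 + 3 / 4 * (φ x ^ 2 * ‖gradient U x‖ ^ 2)) * ρ x) := by
    have : (fun x : E =>
        (4 * (‖gradient φ x‖ ^ 2) + K * φ x ^ 2 + 3 / 4 * (φ x ^ 2 * ‖gradient U x‖ ^ 2)) * ρ x)
        = fun x : E => 4 * (‖gradient φ x‖ ^ 2 * ρ x) + K * (φ x ^ 2 * ρ x)
            + 3 / 4 * (φ x ^ 2 * ‖gradient U x‖ ^ 2 * ρ x) := by
      ext x; ring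
    rw [this]
    exact ((intB.const_mul 4).add (intC.const_mul K)).add (intA.const_mul (3/4))
  have bound : ∀ x : E,
      (2 * φ x * ⟪gradient φ x, gradient U x⟫ + φ x ^ 2 * lapl d U x) * ρ x
        ≤ (4 * (‖gradient φ x‖ ^ 2) + K * φ x ^ 2
            + 3 / 4 * (φ x ^ 2 * ‖gradient U x‖ ^ 2)) * ρ x := by
    intro x
    refine mul_le_mul_of_nonneg_right ?_ (hρpos x)
    have ha : |⟪gradient φ x, gradient U x⟫| ≤ ‖gradient φ x‖ * ‖gradient U x‖ :=
      abs_real_inner_le_norm _ _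
    have hb : φ x * ⟪gradient φ x, gradient U x⟫ ≤ |φ x| * |⟪gradient φ x, gradient U x⟫| := by
      calc φ x * ⟪gradient φ x, gradient U x⟫ ≤ |φ x * ⟪gradient φ x, gradient U x⟫| :=
            le_abs_self _
        _ = |φ x| * |⟪gradient φ x, gradient U x⟫| := abs_mul _ _
    have hl : φ x ^ 2 * lapl d U x ≤ φ x ^ 2 * (K + ‖gradient U x‖ ^ 2 / 2) :=
      mul_le_mul_of_nonneg_left (hLap x) (sq_nonneg _)
    nlinarith [sq_nonneg (2 * ‖gradient φ x‖ - |φ x| * ‖gradient U x‖ / 2), sq_abs (φ x),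
      abs_nonneg (φ x), norm_nonneg (gradient φ x), norm_nonneg (gradient U x),
      abs_nonneg ⟪gradient φ x, gradient U x⟫]
  have step : A ≤ 4 * B + K * C + 3 / 4 * A := by
    have h3 := integral_mono intF intG bound
    rw [← key] at h3
    have h4 : (∫ x : E, (4 * (‖gradient φ x‖ ^ 2) + K * φ x ^ 2
        + 3 / 4 * (φ x ^ 2 * ‖gradient U x‖ ^ 2)) * ρ x) = 4 * B + K * C + 3 / 4 * A := by
      have heq : (fun x : E =>
          (4 * (‖gradient φ x‖ ^ 2) + K * φ x ^ 2 + 3 / 4 * (φ x ^ 2 * ‖gradient U x‖ ^ 2)) * ρ x)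
          = fun x : E => 4 * (‖gradient φ x‖ ^ 2 * ρ x) + K * (φ x ^ 2 * ρ x)
              + 3 / 4 * (φ x ^ 2 * ‖gradient U x‖ ^ 2 * ρ x) := by
        ext x; ring
      have hfint : Integrable (fun x : E => 4 * (‖gradient φ x‖ ^ 2 * ρ x) + K * (φ x ^ 2 * ρ x)) :=
        (intB.const_mul 4).add (intC.const_mul K)
      rw [heq, integral_add hfint (intA.const_mul (3/4)),
        integral_add (intB.const_mul 4) (intC.const_mul K),
        integral_const_mul, integral_const_mul, integral_const_mul]
    linarith [h4 ▸ h3]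
  have final : A ≤ 16 * B + 4 * K * C := by linarith
  exact final

lemma gibbs_integral (U : E → ℝ) (hU : Continuous U) (Z : ℝ) (hZ : 0 < Z) (g : E → ℝ) :
    ∫ x, g x ∂(gibbs d U Z) = Z⁻¹ * ∫ x : E, g x * Real.exp (-U x) := by
  have hmeas : Measurable fun x : E => Real.toNNReal (Real.exp (-U x) / Z) :=
    (continuous_real_toNNReal.comp ((Real.continuous_exp.comp hU.neg).div_const Z)).measurable
  have h0 : gibbs d U Z
      = volume.withDensity (fun x => ((Real.toNNReal (Real.exp (-U x) / Z) : ℝ≥0) : ℝ≥0∞)) := rfl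
  rw [h0, integral_withDensity_eq_integral_smul hmeas]
  rw [← integral_const_mul]
  congr 1; ext x
  have hpos : 0 ≤ Real.exp (-U x) / Z := div_nonneg (Real.exp_pos _).le hZ.le
  rw [NNReal.smul_def, Real.coe_toNNReal _ hpos, smul_eq_mul]
  field_simp


lemma Zpos (U : E → ℝ) (hIntU : Integrable (fun x : E => Real.exp (-U x)))
    (Z : ℝ) (hZ : Z = ∫ x : E, Real.exp (-U x)) : 0 < Z := by
  rw [hZ, integral_pos_iff_support_of_nonneg (fun x => (Real.exp_pos _).le) hIntU]
  have : Function.support (fun x : E => Real.exp (-U x)) = Set.univ := by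
    ext x; simp [(Real.exp_pos _).ne']
  rw [this]
  exact isOpen_univ.measure_pos volume ⟨0, trivial⟩

/-- Under `ΔU ≤ C_U d^{1+ω} + |∇U|²/2`, for `φ ∈ C_c^∞(ℝ^d)`:
`∫ φ²|∇U|² dπ ≤ 16 ∫ |∇φ|² dπ + 4 C_U d^{1+ω} ∫ φ² dπ`. -/
theorem stmt2 (d : ℕ) (hd : 1 ≤ d) (U : EuclideanSpace ℝ (Fin d) → ℝ)
    (hU : ContDiff ℝ 2 U)
    (hIntU : Integrable (fun x => Real.exp (-U x)))
    (Z : ℝ) (hZ : Z = ∫ x, Real.exp (-U x))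
    (C_U ω : ℝ) (hCU : 0 < C_U) (hω : 0 ≤ ω)
    (hLap : ∀ x, lapl d U x ≤ C_U * (d : ℝ) ^ ((1 : ℝ) + ω) + ‖gradient U x‖ ^ 2 / 2)
    (φ : EuclideanSpace ℝ (Fin d) → ℝ)
    (hφ : ContDiff ℝ (⊤ : ℕ∞) φ) (hφc : HasCompactSupport φ) :
    ∫ x, (φ x) ^ 2 * ‖gradient U x‖ ^ 2 ∂(gibbs d U Z)
      ≤ 16 * ∫ x, ‖gradient φ x‖ ^ 2 ∂(gibbs d U Z)
        + 4 * C_U * (d : ℝ) ^ ((1 : ℝ) + ω) * ∫ x, (φ x) ^ 2 ∂(gibbs d U Z) := by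
  have hZpos : 0 < Z := Zpos U hIntU Z hZ
  have key := vol_ineq U hU (C_U * (d : ℝ) ^ ((1 : ℝ) + ω)) hLap φ hφ hφc
  rw [gibbs_integral U hU.continuous Z hZpos, gibbs_integral U hU.continuous Z hZpos,
    gibbs_integral U hU.continuous Z hZpos]
  have h := mul_le_mul_of_nonneg_left key (inv_nonneg.2 hZpos.le)
  exact le_of_le_of_eq h (by ring)
end

section
/- Let τ > 0, c ≥ 1 and c₂ > 0. Then there exist C > 0 and t₀ ≥ 2 such that for all t ≥ t₀, inf{ r ∈ (0,1) : c₂ t ≥ c² (1 + r^{−τ})² log(1/r) } ≤ C ( log t / t )^{1/(2τ)}. In particular, the infimum is attained below a quantity of order t^{−1/(2τ)} up to a logarithmic factor. -/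
set_option maxHeartbeats 1000000


open Real

/-- Rate computation for the polynomial decay: for `α₁(r) = c(1 + r^{−τ})`, the quantity
`inf{ r ∈ (0,1) : c₂ t ≥ c²(1 + r^{−τ})² log(1/r) }` is eventually bounded by
`C (log t / t)^{1/(2τ)}`. -/
theorem stmt18 (τ c c₂ : ℝ) (hτ : 0 < τ) (hc : 1 ≤ c) (hc₂ : 0 < c₂) :
    ∃ C > 0, ∃ t₀ : ℝ, 2 ≤ t₀ ∧ ∀ t ≥ t₀,
      sInf {r : ℝ | r ∈ Set.Ioo (0 : ℝ) 1 ∧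
          c ^ 2 * (1 + r ^ (-τ)) ^ 2 * Real.log (1 / r) ≤ c₂ * t}
        ≤ C * (Real.log t / t) ^ (1 / (2 * τ)) := by
  set A : ℝ := max 1 (2 * c ^ 2 / (τ * c₂)) with hA_def
  have hA1 : (1 : ℝ) ≤ A := le_max_left _ _
  have hA2 : 2 * c ^ 2 / (τ * c₂) ≤ A := le_max_right _ _
  have hA0 : 0 < A := lt_of_lt_of_le one_pos hA1
  refine ⟨A ^ (1 / (2 * τ)), Real.rpow_pos_of_pos hA0 _, max 3 (16 * A ^ 2), le_trans (by norm_num) (le_max_left _ _), ?_⟩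
  intro t ht
  have ht3 : (3 : ℝ) ≤ t := le_trans (le_max_left _ _) ht
  have htA : 16 * A ^ 2 ≤ t := le_trans (le_max_right _ _) ht
  have ht0 : 0 < t := by linarith
  -- log t ≥ 1
  have hlog1 : (1 : ℝ) ≤ Real.log t := by
    rw [Real.le_log_iff_exp_le ht0]
    have := Real.exp_one_lt_d9
    linarith
  have hlog0 : 0 < Real.log t := lt_of_lt_of_le one_pos hlog1
  -- A * log t ≤ t / 2
  have hsqrt : Real.sqrt t * Real.sqrt t = t := Real.mul_self_sqrt ht0.le
  have hsqrt_pos : 0 < Real.sqrt t := Real.sqrt_pos.2 ht0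
  have hsqrt4A : 4 * A ≤ Real.sqrt t := by
    have : Real.sqrt (16 * A ^ 2) ≤ Real.sqrt t := Real.sqrt_le_sqrt htA
    have h16 : Real.sqrt (16 * A ^ 2) = 4 * A := by
      rw [show (16 : ℝ) * A ^ 2 = (4 * A) ^ 2 by ring]
      exact Real.sqrt_sq (by positivity)
    linarith [h16 ▸ this]
  have hlogsqrt : Real.log t ≤ 2 * Real.sqrt t := by
    have h1 : Real.log (Real.sqrt t) = Real.log t / 2 := Real.log_sqrt ht0.le
    have h2 : Real.log (Real.sqrt t) ≤ Real.sqrt t - 1 := Real.log_le_sub_one_of_pos hsqrt_pos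
    nlinarith
  have hAlog : A * Real.log t ≤ t / 2 := by
    have : A * Real.log t ≤ A * (2 * Real.sqrt t) := by
      apply mul_le_mul_of_nonneg_left hlogsqrt hA0.le
    nlinarith
  have hAlog_pos : 0 < A * Real.log t := mul_pos hA0 hlog0
  set u : ℝ := A * Real.log t / t with hu_def
  have hu0 : 0 < u := div_pos hAlog_pos ht0
  have hu_half : u ≤ 1 / 2 := by
    rw [hu_def, div_le_div_iff₀ ht0 (by norm_num)]
    linarith
  have hu1 : u < 1 := lt_of_le_of_lt hu_half (by norm_num)
  set r : ℝ := u ^ (1 / (2 * τ)) with hr_def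
  have hτ2 : (0 : ℝ) < 1 / (2 * τ) := by positivity
  have hr0 : 0 < r := Real.rpow_pos_of_pos hu0 _
  have hr1 : r < 1 := Real.rpow_lt_one hu0.le hu1 hτ2
  -- r ^ (-τ) = u ^ (-(1/2))
  have hrτ : r ^ (-τ) = u ^ (-(1/2) : ℝ) := by
    rw [hr_def, ← Real.rpow_mul hu0.le]
    congr 1
    field_simp
  set x : ℝ := u ^ (-(1/2) : ℝ) with hx_def
  have hx1 : (1 : ℝ) ≤ x := by
    have := Real.rpow_le_rpow_of_exponent_ge hu0 hu1.le (show -(1/2 : ℝ) ≤ 0 by norm_num)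
    rwa [Real.rpow_zero] at this
  have hxsq : x ^ 2 = u⁻¹ := by
    rw [hx_def, ← Real.rpow_natCast (u ^ (-(1/2) : ℝ)) 2, ← Real.rpow_mul hu0.le]
    norm_num [Real.rpow_neg_one]
  -- log (1/r)
  have hlogr : Real.log (1 / r) = (1 / (2 * τ)) * (-Real.log u) := by
    rw [one_div, Real.log_inv, hr_def, Real.log_rpow hu0]
    ring
  have hlogu : -Real.log u ≤ Real.log t := by
    rw [hu_def, Real.log_div (ne_of_gt hAlog_pos) (ne_of_gt ht0)]
    have : 0 ≤ Real.log (A * Real.log t) :=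
      Real.log_nonneg (by nlinarith)
    linarith
  have hlogu0 : 0 ≤ -Real.log u := by
    have : Real.log u ≤ 0 := Real.log_nonpos hu0.le hu1.le
    linarith
  -- r is in the set
  have hmem : r ∈ {r : ℝ | r ∈ Set.Ioo (0 : ℝ) 1 ∧
      c ^ 2 * (1 + r ^ (-τ)) ^ 2 * Real.log (1 / r) ≤ c₂ * t} := by
    refine ⟨⟨hr0, hr1⟩, ?_⟩
    rw [hrτ, hlogr]
    have hsq : (1 + x) ^ 2 ≤ 4 * u⁻¹ := by
      have h1 : (1 + x) ^ 2 ≤ (2 * x) ^ 2 := by nlinarith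
      nlinarith [hxsq]
    have hc0 : (0 : ℝ) < c := lt_of_lt_of_le one_pos hc
    have step1 : c ^ 2 * (1 + x) ^ 2 * ((1 / (2 * τ)) * (-Real.log u)) ≤
        c ^ 2 * (4 * u⁻¹) * ((1 / (2 * τ)) * Real.log t) := by
      apply mul_le_mul
      · apply mul_le_mul_of_nonneg_left hsq (by positivity)
      · apply mul_le_mul_of_nonneg_left hlogu (by positivity)
      · positivity
      · positivity
    refine le_trans step1 ?_
    have huinv : u⁻¹ = t / (A * Real.log t) := by
      rw [hu_def]; field_simp
    rw [huinv]
    have key : c ^ 2 * (4 * (t / (A * Real.log t))) * (1 / (2 * τ) * Real.log t)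
        = 2 * c ^ 2 / (A * τ) * t := by
      field_simp
      ring
    rw [key]
    rw [div_le_iff₀ (mul_pos hτ hc₂)] at hA2
    rw [div_mul_eq_mul_div, div_le_iff₀ (by positivity : (0:ℝ) < A * τ)]
    nlinarith
  -- conclude via csInf
  have hbdd : BddBelow {r : ℝ | r ∈ Set.Ioo (0 : ℝ) 1 ∧
      c ^ 2 * (1 + r ^ (-τ)) ^ 2 * Real.log (1 / r) ≤ c₂ * t} :=
    ⟨0, fun y hy => le_of_lt hy.1.1⟩
  have hinf := csInf_le hbdd hmem
  refine le_trans hinf ?_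
  rw [hr_def, hu_def, mul_div_assoc,
    Real.mul_rpow hA0.le (by positivity : (0:ℝ) ≤ Real.log t / t)]
end
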